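/- For every real x ≥ 5, one has π/6 < θ_x + π/x < π/2, where θ_x = π/2 − arccos(1/(2 cos(π/x))). -/
import Mathlib

/-- `θ_x = π/2 - arccos (1 / (2 cos (π/x)))`. -/
noncomputable def theta (x : ℝ) : ℝ :=
  Real.pi / 2 - Real.arccos (1 / (2 * Real.cos (Real.pi / x)))

/-- For every real `x ≥ 5`, `π/6 < θ_x + π/x < π/2`. -/
theorem theta_add_bounds (x : ℝ) (hx : 5 ≤ x) :
    Real.pi / 6 < theta x + Real.pi / x ∧ theta x + Real.pi / x < Real.pi / 2 := by
  have hπ := Real.pi_pos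
  have hx0 : (0:ℝ) < x := by linarith
  set t := Real.pi / x with ht
  have ht0 : 0 < t := div_pos hπ hx0
  have ht5 : t ≤ Real.pi / 5 := by
    apply div_le_div_of_nonneg_left hπ.le (by norm_num) hx
  have ht4 : t < Real.pi / 4 := lt_of_le_of_lt ht5 (by linarith)
  have htπ : t ≤ Real.pi := le_trans ht5 (by linarith)
  set c := Real.cos t with hc
  have hsqrt2 : Real.sqrt 2 / 2 < c := by
    have := Real.cos_lt_cos_of_nonneg_of_le_pi ht0.le (by linarith : Real.pi / 4 ≤ Real.pi) ht4
    rwa [Real.cos_pi_div_four] at this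
  have hs2 : (1:ℝ) < Real.sqrt 2 := by
    nlinarith [Real.sq_sqrt (by norm_num : (2:ℝ) ≥ 0), Real.sqrt_nonneg 2]
  have hchalf : (1:ℝ)/2 < c := by linarith
  have hc0 : 0 < c := by linarith
  have hclt1 : c < 1 := by
    have := Real.cos_lt_cos_of_nonneg_of_le_pi le_rfl htπ ht0
    simpa using this
  have h2c2 : 1 < 2 * c * c := by
    nlinarith [Real.sq_sqrt (by norm_num : (2:ℝ) ≥ 0)]
  have hkey : 1 / (2 * c) < c := by
    rw [div_lt_iff₀ (by linarith)]; nlinarith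
  have hkey2 : (1:ℝ)/2 < 1 / (2 * c) := by
    rw [div_lt_div_iff₀ (by norm_num) (by linarith)]; linarith
  have heq : 1 / (2*c) = c⁻¹ * (1/2) := by ring
  constructor
  · -- arccos (1/(2c)) < π/3 + t
    have h1 : Real.arccos (1 / (2 * c)) < Real.arccos (1/2) :=
      Real.strictAntiOn_arccos ⟨by norm_num, by norm_num⟩
        ⟨by linarith, by linarith⟩ hkey2
    have h2 : Real.arccos (1/2) = Real.pi / 3 := by
      rw [show (1:ℝ)/2 = Real.cos (Real.pi/3) by rw [Real.cos_pi_div_three]]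
      exact Real.arccos_cos (by linarith) (by linarith)
    simp only [theta, ← ht, ← hc]
    rw [h2] at h1
    linarith
  · -- t < arccos (1/(2c))
    have h1 : Real.arccos c < Real.arccos (1 / (2 * c)) :=
      Real.strictAntiOn_arccos ⟨by linarith, by linarith⟩
        ⟨by linarith, hclt1.le⟩ hkey
    have h2 : Real.arccos c = t := Real.arccos_cos ht0.le htπ
    simp only [theta, ← ht, ← hc]
    linarith
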